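/- Let H be a hereditary class of finite L-structures over a finite relational language L of arity r, in which every structure is totally k-bounded (every relation R(x_1,...,x_s) satisfies: for every proper nonempty partition of variables, fixing one side admits fewer than k completions to a tuple in R) and suppose every component of every member of H has size at most m, with m' ≤ m maximal such that H contains structures with arbitrarily many components of size m', and m' ≥ 2. Then |H_n| ≤ n^{n(1−1/m'+o(1))}. -/

import Mathlib

open FirstOrder FirstOrder.Language Filter

/-- The structure induced on `N` by pulling back the relations of a relational structure
on `M` along a map `f : N → M`. -/
def pullbackStruct (L : FirstOrder.Language) [L.IsRelational] {M N : Type*}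
    [L.Structure M] (f : N → M) : L.Structure N where
  funMap := fun {_} F _ => isEmptyElim F
  RelMap := fun {_} R v => Structure.RelMap R (f ∘ v)

/-- One step of a path inside `A`. -/
def StepIn (L : FirstOrder.Language) {M : Type*} [L.Structure M] (A : Set M)
    (x y : M) : Prop :=
  x ∈ A ∧ y ∈ A ∧ ∃ (n : ℕ) (R : L.Relations n) (v : Fin n → M),
    Structure.RelMap R v ∧ (∀ i, v i ∈ A) ∧ x ∈ Set.range v ∧ y ∈ Set.range v

/-- A set is connected if any two of its elements are joined by a path of overlapping
relation tuples inside the set. -/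
def IsConnectedSet (L : FirstOrder.Language) {M : Type*} [L.Structure M]
    (A : Set M) : Prop :=
  ∀ a ∈ A, ∀ b ∈ A, Relation.ReflTransGen (StepIn L A) a b

/-- A component is a maximal connected set. -/
def IsComponent (L : FirstOrder.Language) {M : Type*} [L.Structure M]
    (A : Set M) : Prop :=
  IsConnectedSet L A ∧ ∀ B : Set M, A ⊆ B → IsConnectedSet L B → B = A

/-- Totally `k`-bounded structure. -/
def TotallyBddStruct (L : FirstOrder.Language) (M : Type*) [L.Structure M]
    (k : ℕ) : Prop :=
  ∀ (s : ℕ) (R : L.Relations s) (I : Finset (Fin s)), I.Nonempty → I ≠ Finset.univ →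
    ∀ v : Fin s → M,
      {w : Fin s → M | Structure.RelMap R w ∧ ∀ i ∈ I, w i = v i}.Finite ∧
      {w : Fin s → M | Structure.RelMap R w ∧ ∀ i ∈ I, w i = v i}.ncard < k


namespace S12
section Comp

variable {L : FirstOrder.Language} {M : Type*} [L.Structure M]

theorem stepIn_mono {A B : Set M} (h : A ⊆ B) {x y : M} (hs : StepIn L A x y) :
    StepIn L B x y := by
  obtain ⟨hx, hy, n, R, v, hR, hv, hxr, hyr⟩ := hs
  exact ⟨h hx, h hy, n, R, v, hR, fun i => h (hv i), hxr, hyr⟩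

theorem IsConnectedSet.mono_path {A B : Set M} (h : A ⊆ B) {x y : M}
    (hp : Relation.ReflTransGen (StepIn L A) x y) :
    Relation.ReflTransGen (StepIn L B) x y :=
  Relation.ReflTransGen.mono (fun _ _ hs => stepIn_mono h hs) x y hp

/-- The component of `x`. -/
def compSet (L : FirstOrder.Language) {M : Type*} [L.Structure M] (x : M) : Set M :=
  ⋃₀ {A | IsConnectedSet L A ∧ x ∈ A}

theorem connSingleton12 (x : M) : IsConnectedSet L ({x} : Set M) := by
  intro a ha b hb
  rw [Set.mem_singleton_iff] at ha hb
  subst ha; subst hb; exact Relation.ReflTransGen.refl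

theorem mem_compSet_self (x : M) : x ∈ compSet L x :=
  Set.mem_sUnion.2 ⟨{x}, ⟨connSingleton12 x, rfl⟩, rfl⟩

theorem subset_compSet' {A : Set M} {x : M} (hA : IsConnectedSet L A) (hx : x ∈ A) :
    A ⊆ compSet L x :=
  Set.subset_sUnion_of_mem ⟨hA, hx⟩

theorem isConnected_compSet (x : M) : IsConnectedSet L (compSet L x) := by
  intro a ha b hb
  obtain ⟨A, ⟨hAc, hAx⟩, haA⟩ := Set.mem_sUnion.1 ha
  obtain ⟨B, ⟨hBc, hBx⟩, hbB⟩ := Set.mem_sUnion.1 hb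
  have h1 : Relation.ReflTransGen (StepIn L (compSet L x)) a x :=
    IsConnectedSet.mono_path (subset_compSet' hAc hAx) (hAc a haA x hAx)
  have h2 : Relation.ReflTransGen (StepIn L (compSet L x)) x b :=
    IsConnectedSet.mono_path (subset_compSet' hBc hBx) (hBc x hBx b hbB)
  exact h1.trans h2

theorem compSet_eq_of_mem {x y : M} (h : y ∈ compSet L x) :
    compSet L y = compSet L x := by
  have h1 : compSet L x ⊆ compSet L y := subset_compSet' (isConnected_compSet x) h
  have h2 : compSet L y ⊆ compSet L x :=
    subset_compSet' (isConnected_compSet y) (h1 (mem_compSet_self x))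
  exact le_antisymm h2 h1

theorem isComponent_compSet (x : M) : IsComponent L (compSet L x) := by
  refine ⟨isConnected_compSet x, fun B hsub hB => ?_⟩
  exact le_antisymm (subset_compSet' hB (hsub (mem_compSet_self x))) hsub

/-- Any tuple of a true relation lies in a single component. -/
theorem compSet_eq_of_rel {s : ℕ} {R : L.Relations s} {v : Fin s → M}
    (hR : Structure.RelMap R v) (i j : Fin s) : compSet L (v i) = compSet L (v j) := by
  have hconn : IsConnectedSet L (Set.range v) := by
    intro a ha b hb
    exact Relation.ReflTransGen.single ⟨ha, hb, s, R, v, hR, fun i => ⟨i, rfl⟩, ha, hb⟩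
  have hsub : Set.range v ⊆ compSet L (v j) := subset_compSet' hconn ⟨j, rfl⟩
  exact compSet_eq_of_mem (hsub ⟨i, rfl⟩)

end Comp
end S12
namespace S12
section Fmin

variable {L : FirstOrder.Language} {n : ℕ} [L.Structure (Fin n)]

/-- The minimum of the component of `x`. -/
noncomputable def fmin (L : FirstOrder.Language) {n : ℕ} [L.Structure (Fin n)]
    (x : Fin n) : Fin n :=
  ((Set.toFinite (compSet L x)).toFinset).min' ⟨x, by
    simp [Set.Finite.mem_toFinset, mem_compSet_self]⟩

theorem fmin_mem (x : Fin n) : fmin L x ∈ compSet L x := by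
  have := Finset.min'_mem ((Set.toFinite (compSet L x)).toFinset)
    ⟨x, by simp [Set.Finite.mem_toFinset, mem_compSet_self]⟩
  exact (Set.Finite.mem_toFinset _).1 this

theorem fmin_eq_of_compSet_eq {x y : Fin n} (h : compSet L x = compSet L y) :
    fmin L x = fmin L y := by
  have ht : (Set.toFinite (compSet L x)).toFinset
      = (Set.toFinite (compSet L y)).toFinset := by
    ext z; simp [Set.Finite.mem_toFinset, h]
  unfold fmin
  apply le_antisymm
  · exact Finset.min'_le _ _ (by rw [ht]; exact Finset.min'_mem _ _)
  · exact Finset.min'_le _ _ (by rw [← ht]; exact Finset.min'_mem _ _)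

theorem fmin_eq_of_mem {x y : Fin n} (h : y ∈ compSet L x) :
    fmin L y = fmin L x :=
  fmin_eq_of_compSet_eq (compSet_eq_of_mem h)

theorem fmin_idem (x : Fin n) : fmin L (fmin L x) = fmin L x :=
  fmin_eq_of_mem (fmin_mem x)

theorem fiber_subset_compSet {x y : Fin n} (h : fmin L x = y) :
    x ∈ compSet L y := by
  have : y ∈ compSet L x := h ▸ fmin_mem x
  exact (compSet_eq_of_mem this) ▸ mem_compSet_self x

end Fmin
end S12
namespace S12
section Pack

open Classical in
noncomputable def fiberEmb (n m : ℕ) (f : Fin n → Fin n) (y : Fin n) :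
    {z : Fin n // f z = y} → Fin (m + 1) :=
  if h : Nonempty ({z : Fin n // f z = y} ↪ Fin (m + 1)) then h.some else fun _ => 0

theorem fiberEmb_injective {n m : ℕ} {f : Fin n → Fin n} {y : Fin n}
    (h : Nat.card {z : Fin n // f z = y} ≤ m + 1) :
    Function.Injective (fiberEmb n m f y) := by
  classical
  have hc : Fintype.card {z : Fin n // f z = y} ≤ Fintype.card (Fin (m + 1)) := by
    rwa [Fintype.card_fin, ← Nat.card_eq_fintype_card]
  have hne : Nonempty ({z : Fin n // f z = y} ↪ Fin (m + 1)) :=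
    Function.Embedding.nonempty_of_card_le hc
  unfold fiberEmb
  rw [dif_pos hne]
  exact hne.some.injective

/-- Compression of a point into its fiber index. -/
noncomputable def packFn (n m : ℕ) (f : Fin n → Fin n) (x z : Fin n) : Fin (m + 1) :=
  if h : f z = f x then fiberEmb n m f (f x) ⟨z, h⟩ else 0

theorem packFn_inj {n m : ℕ} {f : Fin n → Fin n}
    (hf : ∀ y, Nat.card {z : Fin n // f z = y} ≤ m + 1)
    {x z z' : Fin n} (hz : f z = f x) (hz' : f z' = f x)
    (h : packFn n m f x z = packFn n m f x z') : z = z' := by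
  rw [packFn, packFn, dif_pos hz, dif_pos hz'] at h
  have := fiberEmb_injective (hf (f x)) h
  exact congrArg Subtype.val this

end Pack
end S12
namespace S12
section Few

open Classical in
theorem card_fewFixed (n t : ℕ) :
    Nat.card {f : Fin n → Fin n // t ≤ (Finset.univ.filter (fun x => f x = x)).card} ≤
      2 ^ n * (n + 1) ^ (n - t) := by
  classical
  set d := n - t with hd
  set D : (Fin n → Fin n) → Finset (Fin n) :=
    fun f => Finset.univ.filter (fun x => ¬ f x = x) with hD
  have hDcard : ∀ f : Fin n → Fin n,
      t ≤ (Finset.univ.filter (fun x => f x = x)).card → (D f).card ≤ d := by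
    intro f hf
    have := Finset.card_filter_add_card_filter_not
      (s := (Finset.univ : Finset (Fin n))) (p := fun x => f x = x)
    simp only [Finset.card_univ, Fintype.card_fin] at this
    simp only [hD, hd]
    omega
  set ψ : {f : Fin n → Fin n // t ≤ (Finset.univ.filter (fun x => f x = x)).card} →
      Finset (Fin n) × (Fin d → Fin (n + 1)) :=
    fun f => (D f.1, fun i => if hi : (i : ℕ) < (D f.1).card then
      Fin.castSucc (f.1 ((D f.1).orderIsoOfFin rfl ⟨i, hi⟩)) else 0) with hψ
  have hinj : Function.Injective ψ := by
    rintro ⟨f, hf⟩ ⟨g, hg⟩ h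
    simp only [hψ, Prod.mk.injEq] at h
    obtain ⟨h1, h2⟩ := h
    rw [← h1] at h2
    apply Subtype.ext
    show f = g
    funext x
    by_cases hx : x ∈ D f
    · set j := ((D f).orderIsoOfFin rfl).symm ⟨x, hx⟩ with hj
      have jlt : (j : ℕ) < (D f).card := j.isLt
      have ilt : (j : ℕ) < d := lt_of_lt_of_le jlt (hDcard f hf)
      have := congrFun h2 ⟨(j : ℕ), ilt⟩
      simp only [dif_pos jlt] at this
      have hval : ((D f).orderIsoOfFin rfl ⟨(j : ℕ), jlt⟩ : Fin n) = x := by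
        have : (⟨(j : ℕ), jlt⟩ : Fin (D f).card) = j := rfl
        rw [this, hj]
        simp
      rw [hval] at this
      exact Fin.castSucc_injective _ this
    · have hfx : f x = x := by
        have := hx
        simp only [hD, Finset.mem_filter, Finset.mem_univ, true_and, not_not] at this
        exact this
      have hgx : g x = x := by
        rw [h1] at hx
        simp only [hD, Finset.mem_filter, Finset.mem_univ, true_and, not_not] at hx
        exact hx
      rw [hfx, hgx]
  calc Nat.card {f : Fin n → Fin n // t ≤ (Finset.univ.filter (fun x => f x = x)).card}
      ≤ Nat.card (Finset (Fin n) × (Fin d → Fin (n + 1))) :=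
        Nat.card_le_card_of_injective ψ hinj
    _ = 2 ^ n * (n + 1) ^ d := by
        simp [Nat.card_eq_fintype_card, Fintype.card_finset, Fintype.card_fun]

end Few
end S12
namespace S12
section Ext

theorem structure_ext (L : FirstOrder.Language) [L.IsRelational] {M : Type*} (r : ℕ)
    (harity : ∀ s, r < s → IsEmpty (L.Relations s)) (S S' : L.Structure M)
    (h : ∀ s, s ≤ r → ∀ (R : L.Relations s) (v : Fin s → M),
      @Structure.RelMap L M S s R v ↔ @Structure.RelMap L M S' s R v) : S = S' := by
  obtain ⟨fm, rm⟩ := S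
  obtain ⟨fm', rm'⟩ := S'
  congr 1
  · funext s F v
    exact isEmptyElim F
  · funext s R v
    by_cases hs : s ≤ r
    · exact propext (h s hs R v)
    · exact ((harity s (by omega)).false R).elim

end Ext
end S12
namespace S12
section Count

open Finset

theorem count_main (L : FirstOrder.Language) [L.IsRelational]
    [∀ i, Finite (L.Relations i)] (r : ℕ)
    (harity : ∀ s, r < s → IsEmpty (L.Relations s)) (n m t : ℕ) (hn : 0 < n)
    (Hset : Set (L.Structure (Fin n)))
    (hcomp : ∀ S ∈ Hset, ∀ x : Fin n, (@compSet L (Fin n) S x).ncard ≤ m)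
    (hfix : ∀ S ∈ Hset, t ≤ (Finset.univ.filter fun x => @fmin L n S x = x).card) :
    Hset.ncard ≤ 2 ^ n * (n + 1) ^ (n - t) *
      (2 ^ (n * (m + 1) ^ r)) ^ (∑ s : Fin (r + 1), Nat.card (L.Relations (s : ℕ))) := by
  classical
  set A := {f : Fin n → Fin n // t ≤ (Finset.univ.filter fun x => f x = x).card} with hA
  -- the encoding of tuples
  set enc : (Fin n → Fin n) → ∀ s : ℕ, (Fin s → Fin n) → Fin n × (Fin s → Fin (m + 1)) :=
    fun f s v => ((if h : 0 < s then v ⟨0, h⟩ else ⟨0, hn⟩),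
      fun i => packFn n m f (if h : 0 < s then v ⟨0, h⟩ else ⟨0, hn⟩) (v i)) with henc
  -- fibers of fmin are small
  have h_fiber : ∀ S ∈ Hset, ∀ y : Fin n,
      Nat.card {z : Fin n // @fmin L n S z = y} ≤ m + 1 := by
    intro S hS y
    have h1 : Nat.card {z : Fin n // @fmin L n S z = y}
        = ({z : Fin n | @fmin L n S z = y}).ncard := Nat.card_coe_set_eq _
    rw [h1]
    have h2 : {z : Fin n | @fmin L n S z = y} ⊆ @compSet L (Fin n) S y := by
      intro z hz
      exact @fiber_subset_compSet L n S z y hz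
    calc ({z : Fin n | @fmin L n S z = y}).ncard
        ≤ (@compSet L (Fin n) S y).ncard := Set.ncard_le_ncard h2 (Set.toFinite _)
      _ ≤ m := hcomp S hS y
      _ ≤ m + 1 := Nat.le_succ m
  -- tuples of relations lie in one fiber
  have h_W : ∀ (S : L.Structure (Fin n)), ∀ (s : ℕ) (R : L.Relations s)
      (v : Fin s → Fin n), @Structure.RelMap L (Fin n) S s R v →
      ∀ i j : Fin s, @fmin L n S (v i) = @fmin L n S (v j) := by
    intro S s R v hR i j
    exact @fmin_eq_of_compSet_eq L n S _ _ (@compSet_eq_of_rel L (Fin n) S s R v hR i j)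
  -- the encoding is injective on tuples within fibers
  have h_injOn : ∀ f : Fin n → Fin n, (∀ y, Nat.card {z : Fin n // f z = y} ≤ m + 1) →
      ∀ s : ℕ, Set.InjOn (enc f s) {v : Fin s → Fin n | ∀ i j, f (v i) = f (v j)} := by
    intro f hf s v hv w hw h
    simp only [henc, Prod.mk.injEq] at h
    obtain ⟨h1, h2⟩ := h
    funext i
    have hs : 0 < s := i.pos
    simp only [dif_pos hs] at h1 h2
    have hzv : f (v i) = f (v ⟨0, hs⟩) := hv i ⟨0, hs⟩
    have hzw : f (w i) = f (v ⟨0, hs⟩) := by rw [hw i ⟨0, hs⟩, ← h1]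
    have h5 := congrFun h2 i
    rw [← h1] at h5
    exact packFn_inj hf hzv hzw h5
  -- the big injection
  set Φ : ↥Hset → A × (∀ s : Fin (r + 1), L.Relations (s : ℕ) →
      Set (Fin n × (Fin (s : ℕ) → Fin (m + 1)))) :=
    fun S => (⟨fun x => @fmin L n S.1 x, hfix S.1 S.2⟩,
      fun s R => enc (fun x => @fmin L n S.1 x) (s : ℕ) ''
        {v | @Structure.RelMap L (Fin n) S.1 (s : ℕ) R v}) with hΦ
  have hΦinj : Function.Injective Φ := by
    rintro ⟨S, hS⟩ ⟨S', hS'⟩ h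
    simp only [hΦ, Prod.mk.injEq, Subtype.mk.injEq] at h
    obtain ⟨h1, h2⟩ := h
    apply Subtype.ext
    show S = S'
    apply structure_ext L r harity
    intro s hs R v
    have hsl : s < r + 1 := by omega
    have h3 := congrFun (congrFun h2 ⟨s, hsl⟩) R
    have h1' : (fun x => @fmin L n S x) = (fun x => @fmin L n S' x) := congrArg Subtype.val h1
    rw [← h1'] at h3
    have hfb : ∀ y, Nat.card {z : Fin n // (fun x => @fmin L n S x) z = y} ≤ m + 1 :=
      h_fiber S hS
    have hWS : {w : Fin s → Fin n | @Structure.RelMap L (Fin n) S s R w} ⊆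
        {w : Fin s → Fin n | ∀ i j,
          (fun x => @fmin L n S x) (w i) = (fun x => @fmin L n S x) (w j)} :=
      fun w hw i j => h_W S s R w hw i j
    have hWS' : {w : Fin s → Fin n | @Structure.RelMap L (Fin n) S' s R w} ⊆
        {w : Fin s → Fin n | ∀ i j,
          (fun x => @fmin L n S x) (w i) = (fun x => @fmin L n S x) (w j)} := by
      intro w hw i j
      have h6 := h_W S' s R w hw i j
      calc (fun x => @fmin L n S x) (w i) = (fun x => @fmin L n S' x) (w i) :=
            congrFun h1' (w i)
        _ = (fun x => @fmin L n S' x) (w j) := h6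
        _ = (fun x => @fmin L n S x) (w j) := (congrFun h1' (w j)).symm
    constructor
    · intro hv
      have h7 : enc (fun x => @fmin L n S x) s v ∈ enc (fun x => @fmin L n S x) s ''
          {w | @Structure.RelMap L (Fin n) S' s R w} := by
        rw [← h3]; exact Set.mem_image_of_mem _ hv
      obtain ⟨w, hw, hwv⟩ := h7
      have h8 := h_injOn (fun x => @fmin L n S x) hfb s (hWS' hw) (hWS hv) hwv
      rwa [← h8]
    · intro hv
      have h7 : enc (fun x => @fmin L n S x) s v ∈ enc (fun x => @fmin L n S x) s ''
          {w | @Structure.RelMap L (Fin n) S s R w} := by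
        rw [h3]; exact Set.mem_image_of_mem _ hv
      obtain ⟨w, hw, hwv⟩ := h7
      have h8 := h_injOn (fun x => @fmin L n S x) hfb s (hWS hw) (hWS' hv) hwv
      rwa [← h8]
  -- cardinality computation
  have hcard : Hset.ncard = Nat.card ↥Hset := (Nat.card_coe_set_eq _).symm
  rw [hcard]
  have hle := Nat.card_le_card_of_injective Φ hΦinj
  refine le_trans hle ?_
  rw [Nat.card_prod]
  have hB : Nat.card (∀ s : Fin (r + 1), L.Relations (s : ℕ) →
      Set (Fin n × (Fin (s : ℕ) → Fin (m + 1)))) ≤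
      (2 ^ (n * (m + 1) ^ r)) ^ (∑ s : Fin (r + 1), Nat.card (L.Relations (s : ℕ))) := by
    rw [Nat.card_pi]
    rw [← Finset.prod_pow_eq_pow_sum]
    apply Finset.prod_le_prod'
    intro s _
    have h4 : Nat.card (Set (Fin n × (Fin (s : ℕ) → Fin (m + 1))))
        = 2 ^ (n * (m + 1) ^ (s : ℕ)) := by
      have : Nat.card (Set (Fin n × (Fin (s : ℕ) → Fin (m + 1))))
          = Nat.card Prop ^ Nat.card (Fin n × (Fin (s : ℕ) → Fin (m + 1))) :=
        Nat.card_fun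
      rw [this]
      simp [Nat.card_eq_fintype_card, Fintype.card_prop]
    rw [Nat.card_fun, h4]
    apply Nat.pow_le_pow_left
    apply Nat.pow_le_pow_right (by omega)
    apply Nat.mul_le_mul_left
    exact Nat.pow_le_pow_right (by omega) (by omega)
  calc Nat.card A * Nat.card (∀ s : Fin (r + 1), L.Relations (s : ℕ) →
        Set (Fin n × (Fin (s : ℕ) → Fin (m + 1))))
      ≤ (2 ^ n * (n + 1) ^ (n - t)) *
        ((2 ^ (n * (m + 1) ^ r)) ^ (∑ s : Fin (r + 1), Nat.card (L.Relations (s : ℕ)))) :=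
        Nat.mul_le_mul (card_fewFixed n t) hB
    _ = _ := by ring

end Count
end S12
namespace S12
section Bad

theorem bad_card (L : FirstOrder.Language) {n : ℕ} (S : L.Structure (Fin n)) (m m' : ℕ)
    (hcompS : ∀ A : Set (Fin n), @IsComponent L (Fin n) S A → A.ncard ≤ m)
    (NB : ℕ → ℕ)
    (hNB : ∀ m'', m' < m'' →
      {A : Set (Fin n) | @IsComponent L (Fin n) S A ∧ A.ncard = m''}.ncard ≤ NB m'') :
    (Finset.univ.filter fun x : Fin n => m' < (@compSet L (Fin n) S x).ncard).card ≤
      m * ∑ m'' ∈ Finset.Ioc m' m, NB m'' := by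
  classical
  set bad := Finset.univ.filter fun x : Fin n => m' < (@compSet L (Fin n) S x).ncard
    with hbad
  set cF : Fin n → Finset (Fin n) :=
    fun x => (Set.toFinite (@compSet L (Fin n) S x)).toFinset with hcF
  have hcFcard : ∀ x : Fin n, (cF x).card = (@compSet L (Fin n) S x).ncard := by
    intro x
    rw [hcF]
    exact (Set.ncard_eq_toFinset_card _ _).symm
  have step1 : bad.card ≤ m * (bad.image cF).card := by
    apply Finset.card_le_mul_card_image
    intro A hA
    obtain ⟨x0, hx0, hx0A⟩ := Finset.mem_image.1 hA
    have hsub : bad.filter (fun x => cF x = A) ⊆ A := by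
      intro x hx
      obtain ⟨_, hx2⟩ := Finset.mem_filter.1 hx
      rw [← hx2, hcF]
      simp only [Set.Finite.mem_toFinset]
      exact mem_compSet_self x
    calc (bad.filter (fun x => cF x = A)).card ≤ A.card := Finset.card_le_card hsub
      _ = (@compSet L (Fin n) S x0).ncard := by rw [← hx0A, hcFcard]
      _ ≤ m := hcompS _ (isComponent_compSet x0)
  have step2 : (bad.image cF).card ≤ ∑ m'' ∈ Finset.Ioc m' m, NB m'' := by
    rw [Finset.card_eq_sum_card_fiberwise (f := Finset.card) (t := Finset.Ioc m' m) ?_]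
    · apply Finset.sum_le_sum
      intro m'' hm''
      have hm''2 := Finset.mem_Ioc.1 hm''
      set CS : Set (Set (Fin n)) :=
        {A : Set (Fin n) | @IsComponent L (Fin n) S A ∧ A.ncard = m''} with hCS
      have hfin : CS.Finite := Set.toFinite _
      have hle : ((bad.image cF).filter (fun A => A.card = m'')).card ≤ hfin.toFinset.card := by
        refine Finset.card_le_card_of_injOn
          (fun (A : Finset (Fin n)) => (↑A : Set (Fin n))) ?_ ?_
        · intro A hA
          obtain ⟨hA1, hA2⟩ := Finset.mem_filter.1 hA
          obtain ⟨x0, hx0, hx0A⟩ := Finset.mem_image.1 hA1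
          rw [Finset.mem_coe, Set.Finite.mem_toFinset, hCS]
          constructor
          · rw [← hx0A, hcF]
            simp only [Set.Finite.coe_toFinset]
            exact isComponent_compSet x0
          · rw [Set.ncard_coe_finset]
            exact hA2
        · intro A _ B _ hAB
          exact_mod_cast Finset.coe_injective hAB
      calc ((bad.image cF).filter (fun A => A.card = m'')).card
          ≤ hfin.toFinset.card := hle
        _ = CS.ncard := (Set.ncard_eq_toFinset_card _ hfin).symm
        _ ≤ NB m'' := hNB m'' hm''2.1
    · intro A hA
      obtain ⟨x0, hx0, hx0A⟩ := Finset.mem_image.1 hA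
      rw [Finset.mem_coe, Finset.mem_Ioc, ← hx0A, hcFcard]
      constructor
      · exact (Finset.mem_filter.1 hx0).2
      · exact hcompS _ (isComponent_compSet x0)
  calc bad.card ≤ m * (bad.image cF).card := step1
    _ ≤ m * ∑ m'' ∈ Finset.Ioc m' m, NB m'' := Nat.mul_le_mul_left m step2

theorem fixed_lower (L : FirstOrder.Language) {n : ℕ} (S : L.Structure (Fin n))
    (m' EE : ℕ)
    (hbad : (Finset.univ.filter fun x : Fin n =>
      m' < (@compSet L (Fin n) S x).ncard).card ≤ EE) :
    n - EE ≤ m' * (Finset.univ.filter fun x : Fin n => @fmin L n S x = x).card := by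
  classical
  set good := Finset.univ.filter fun x : Fin n =>
    (@compSet L (Fin n) S x).ncard ≤ m' with hgood
  have hgoodcard : n - EE ≤ good.card := by
    have h0 : good.card + (Finset.univ.filter fun x : Fin n =>
        ¬ (@compSet L (Fin n) S x).ncard ≤ m').card = n := by
      rw [hgood]
      have := Finset.card_filter_add_card_filter_not
        (s := (Finset.univ : Finset (Fin n)))
        (p := fun x => (@compSet L (Fin n) S x).ncard ≤ m')
      simpa using this
    have hb : (Finset.univ.filter fun x : Fin n =>
        ¬ (@compSet L (Fin n) S x).ncard ≤ m').card ≤ EE := by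
      refine le_trans (le_of_eq ?_) hbad
      congr 1
      ext x
      simp [not_le]
    omega
  have hmain : good.card ≤ m' *
      (Finset.univ.filter fun x : Fin n => @fmin L n S x = x).card := by
    have h1 : good.card ≤ m' * (good.image (fun x => @fmin L n S x)).card := by
      apply Finset.card_le_mul_card_image
      intro y hy
      obtain ⟨x0, hx0, hx0y⟩ := Finset.mem_image.1 hy
      have hcy : (@compSet L (Fin n) S y).ncard ≤ m' := by
        have : @compSet L (Fin n) S y = @compSet L (Fin n) S x0 := by
          rw [← hx0y]
          exact @compSet_eq_of_mem L (Fin n) S x0 _ (fmin_mem x0)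
        rw [this]
        exact (Finset.mem_filter.1 hx0).2
      have hsub : good.filter (fun x => @fmin L n S x = y) ⊆
          (Set.toFinite (@compSet L (Fin n) S y)).toFinset := by
        intro x hx
        rw [Set.Finite.mem_toFinset]
        exact @fiber_subset_compSet L n S x y (Finset.mem_filter.1 hx).2
      calc (good.filter (fun x => @fmin L n S x = y)).card
          ≤ (Set.toFinite (@compSet L (Fin n) S y)).toFinset.card :=
            Finset.card_le_card hsub
        _ = (@compSet L (Fin n) S y).ncard := (Set.ncard_eq_toFinset_card _ _).symm
        _ ≤ m' := hcy
    refine le_trans h1 (Nat.mul_le_mul_left m' ?_)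
    apply Finset.card_le_card
    intro y hy
    obtain ⟨x0, _, hx0y⟩ := Finset.mem_image.1 hy
    rw [Finset.mem_filter]
    refine ⟨Finset.mem_univ y, ?_⟩
    rw [← hx0y]
    exact fmin_idem x0
  exact le_trans hgoodcard hmain

end Bad
end S12

open S12 in
set_option maxHeartbeats 1000000 in
theorem stmt12 (L : FirstOrder.Language) [L.IsRelational]
    [∀ n, Finite (L.Relations n)] (r : ℕ)
    (harity : ∀ n, r < n → IsEmpty (L.Relations n))
    (H : ∀ n : ℕ, Set (L.Structure (Fin n)))
    (hered : ∀ (n : ℕ) (S : L.Structure (Fin n)), S ∈ H n →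
      ∀ (j : ℕ) (f : Fin j → Fin n), Function.Injective f →
        (@pullbackStruct L _ (Fin n) (Fin j) S f) ∈ H j)
    (k : ℕ) (hbdd : ∀ (n : ℕ) (S : L.Structure (Fin n)), S ∈ H n →
      @TotallyBddStruct L (Fin n) S k)
    (m m' : ℕ) (hm'le : m' ≤ m) (hm' : 2 ≤ m')
    (hcompbd : ∀ (n : ℕ) (S : L.Structure (Fin n)), S ∈ H n →
      ∀ A : Set (Fin n), @IsComponent L (Fin n) S A → A.ncard ≤ m)
    (harb : ∀ N : ℕ, ∃ (n : ℕ) (S : L.Structure (Fin n)), S ∈ H n ∧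
      N ≤ {A : Set (Fin n) | @IsComponent L (Fin n) S A ∧ A.ncard = m'}.ncard)
    (hmax : ∀ m'' : ℕ, m' < m'' → ∃ N : ℕ,
      ∀ (n : ℕ) (S : L.Structure (Fin n)), S ∈ H n →
        {A : Set (Fin n) | @IsComponent L (Fin n) S A ∧ A.ncard = m''}.ncard < N) :
    ∃ g : ℕ → ℝ, Tendsto g atTop (nhds 0) ∧
      ∀ᶠ n : ℕ in atTop,
        ((H n).ncard : ℝ) ≤ (n : ℝ) ^ ((n : ℝ) * (1 - 1 / (m' : ℝ) + g n)) := by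
  classical
  choose Nfun hNfun using hmax
  set NB : ℕ → ℕ := fun m'' => if h : m' < m'' then Nfun m'' h else 0 with hNB
  set EE : ℕ := m * ∑ m'' ∈ Finset.Ioc m' m, NB m'' with hEE
  set ρ : ℕ := ∑ s : Fin (r + 1), Nat.card (L.Relations (s : ℕ)) with hρ
  set c1 : ℕ := 1 + (m + 1) ^ r * ρ with hc1
  set K : ℝ := (EE : ℝ) + 1 with hK
  set A : ℝ := (c1 : ℝ) * Real.log 2 + 1 with hA
  refine ⟨fun n => A / Real.log n + K / n, ?_, ?_⟩
  · have h1 : Tendsto (fun n : ℕ => A / Real.log n) atTop (nhds 0) := by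
      apply Tendsto.div_atTop (tendsto_const_nhds)
      exact Real.tendsto_log_atTop.comp tendsto_natCast_atTop_atTop
    have h2 : Tendsto (fun n : ℕ => K / (n : ℝ)) atTop (nhds 0) :=
      tendsto_const_div_atTop_nhds_zero_nat K
    simpa using h1.add h2
  · rw [eventually_atTop]
    refine ⟨EE + 2, fun n hn => ?_⟩
    have hm'pos : 0 < m' := by omega
    have hnE : EE ≤ n := by omega
    have hn2 : 2 ≤ n := by omega
    have hnpos : (0 : ℕ) < n := by omega
    set t : ℕ := (n - EE) / m' with ht
    have htn : t ≤ n := le_trans (Nat.div_le_self _ _) (Nat.sub_le _ _)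
    have hcount : (H n).ncard ≤ 2 ^ n * (n + 1) ^ (n - t) *
        (2 ^ (n * (m + 1) ^ r)) ^ ρ := by
      apply count_main L r harity n m t hnpos
      · intro S hS x
        exact hcompbd n S hS _ (isComponent_compSet x)
      · intro S hS
        have hb : (Finset.univ.filter fun x : Fin n =>
            m' < (@compSet L (Fin n) S x).ncard).card ≤ EE := by
          rw [hEE]
          apply bad_card L S m m' (hcompbd n S hS) NB
          intro m'' hm''
          rw [hNB]
          simp only [dif_pos hm'']
          exact le_of_lt (hNfun m'' hm'' n S hS)
        have hfl := fixed_lower L S m' EE hb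
        calc t = (n - EE) / m' := ht
          _ ≤ (m' * (Finset.univ.filter fun x : Fin n =>
              @fmin L n S x = x).card) / m' := Nat.div_le_div_right hfl
          _ = _ := Nat.mul_div_cancel_left _ hm'pos
    -- real estimates
    set nr : ℝ := (n : ℝ) with hnr
    have hnr2 : (2 : ℝ) ≤ nr := by rw [hnr]; exact_mod_cast hn2
    have hnrpos : (0 : ℝ) < nr := by linarith
    have hnr1 : (1 : ℝ) < nr := by linarith
    have hnrne : nr ≠ 0 := ne_of_gt hnrpos
    have hlogpos : 0 < Real.log nr := Real.log_pos hnr1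
    have hlogne : Real.log nr ≠ 0 := ne_of_gt hlogpos
    have hm'r : (1 : ℝ) ≤ (m' : ℝ) := by
      have : (1 : ℕ) ≤ m' := by omega
      exact_mod_cast this
    have hm'rpos : (0 : ℝ) < (m' : ℝ) := by linarith
    have hEEr : (0 : ℝ) ≤ (EE : ℝ) := Nat.cast_nonneg _
    have hKnr : K + 1 ≤ nr := by
      rw [hK, hnr]
      have h9 : ((EE + 2 : ℕ) : ℝ) ≤ (n : ℝ) := by exact_mod_cast hn
      push_cast at h9
      linarith
    have hK0 : (0 : ℝ) ≤ K := by rw [hK]; linarith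
    have hinv : (1 : ℝ) / (m' : ℝ) ≤ 1 := by
      rw [div_le_one hm'rpos]; exact hm'r
    have hinv0 : (0 : ℝ) < 1 / (m' : ℝ) := by positivity
    set d : ℕ := n - t with hd
    have hdr : (d : ℝ) = nr - t := by
      rw [hd, Nat.cast_sub htn, hnr]
    have htlow : nr - (EE : ℝ) < (t : ℝ) * m' + m' := by
      have h0 := Nat.lt_div_mul_add (a := n - EE) hm'pos
      have hcast : ((n - EE : ℕ) : ℝ) = nr - EE := by
        rw [Nat.cast_sub hnE, hnr]
      calc nr - (EE : ℝ) = ((n - EE : ℕ) : ℝ) := hcast.symm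
        _ < (((n - EE) / m' * m' + m' : ℕ) : ℝ) := by exact_mod_cast h0
        _ = (t : ℝ) * m' + m' := by rw [ht]; push_cast; ring
    set q : ℝ := nr * (1 - 1 / (m' : ℝ)) + K with hq
    have hqe : nr * (1 - 1 / (m' : ℝ)) = nr - nr / m' := by
      field_simp
    have hdq : (d : ℝ) ≤ q := by
      rw [hdr, hq, hK, hqe]
      have hgoal : nr / m' ≤ (t : ℝ) + EE + 1 := by
        rw [div_le_iff₀ hm'rpos]
        nlinarith [htlow, hm'r, hEEr, Nat.cast_nonneg (α := ℝ) t]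
      linarith
    have hq0 : 0 ≤ q := by
      rw [hq]
      nlinarith [hinv, hnrpos, hK0]
    -- step 1 : pull the counting bound to the reals
    have step1 : ((H n).ncard : ℝ) ≤ (2 : ℝ) ^ (c1 * n) * (nr + 1) ^ d := by
      have hXnat : 2 ^ n * (n + 1) ^ (n - t) * (2 ^ (n * (m + 1) ^ r)) ^ ρ
          = 2 ^ (c1 * n) * (n + 1) ^ d := by
        rw [hc1, hd, ← pow_mul, mul_right_comm, ← pow_add]
        congr 2
        ring
      rw [hXnat] at hcount
      calc ((H n).ncard : ℝ) ≤ ((2 ^ (c1 * n) * (n + 1) ^ d : ℕ) : ℝ) := by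
            exact_mod_cast hcount
        _ = (2 : ℝ) ^ (c1 * n) * (nr + 1) ^ d := by push_cast; ring
    -- step 2 : bound (nr+1)^d by nr^q * exp nr
    have step2 : (nr + 1) ^ d ≤ nr ^ q * Real.exp nr := by
      have hb1 : ((nr + 1) ^ d : ℝ) = (nr + 1) ^ ((d : ℕ) : ℝ) :=
        (Real.rpow_natCast _ _).symm
      have hb2 : (nr + 1) ^ ((d : ℕ) : ℝ) ≤ (nr + 1) ^ q :=
        Real.rpow_le_rpow_of_exponent_le (by linarith) hdq
      have hb3 : nr + 1 ≤ nr * Real.exp (1 / nr) := by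
        have h5 := Real.add_one_le_exp (1 / nr)
        calc nr + 1 = nr * (1 / nr + 1) := by
              rw [mul_add, mul_one, mul_one_div, div_self hnrne]; ring
          _ ≤ nr * Real.exp (1 / nr) :=
            mul_le_mul_of_nonneg_left h5 (le_of_lt hnrpos)
      have hb4 : (nr + 1) ^ q ≤ (nr * Real.exp (1 / nr)) ^ q :=
        Real.rpow_le_rpow (by linarith) hb3 hq0
      have hb5 : (nr * Real.exp (1 / nr)) ^ q
          = nr ^ q * Real.exp (1 / nr) ^ q :=
        Real.mul_rpow (le_of_lt hnrpos) (le_of_lt (Real.exp_pos _))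
      have hb6' : Real.exp (1 / nr) ^ q = Real.exp (q / nr) := by
        rw [← Real.exp_mul]
        congr 1
        rw [one_div_mul_eq_div]
      have hb7 : Real.exp (q / nr) ≤ Real.exp nr := by
        apply Real.exp_le_exp.2
        rw [div_le_iff₀ hnrpos, hq]
        have h8 : nr * (1 - 1 / (m' : ℝ)) ≤ nr := by nlinarith [hinv0, hnrpos]
        have h9 : 2 * nr ≤ nr * nr := by nlinarith [hnr2, hnrpos]
        linarith [hKnr]
      calc ((nr + 1) ^ d : ℝ) = (nr + 1) ^ ((d : ℕ) : ℝ) := hb1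
        _ ≤ (nr + 1) ^ q := hb2
        _ ≤ (nr * Real.exp (1 / nr)) ^ q := hb4
        _ = nr ^ q * Real.exp (1 / nr) ^ q := hb5
        _ = nr ^ q * Real.exp (q / nr) := by rw [hb6']
        _ ≤ nr ^ q * Real.exp nr := by
            apply mul_le_mul_of_nonneg_left hb7
            positivity
    -- step 3 : rewrite the target
    have hgdef : nr * (1 - 1 / (m' : ℝ) + (A / Real.log nr + K / nr))
        = nr * (1 - 1 / (m' : ℝ)) + (nr * (A / Real.log nr) + K) := by
      field_simp
    have hkey : nr ^ (nr * (A / Real.log nr)) = Real.exp (A * nr) := by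
      rw [Real.rpow_def_of_pos hnrpos]
      congr 1
      field_simp
    have hrhs : nr ^ (nr * (1 - 1 / (m' : ℝ) + (A / Real.log nr + K / nr)))
        = nr ^ (nr * (1 - 1 / (m' : ℝ))) * Real.exp (A * nr) * nr ^ K := by
      rw [hgdef, Real.rpow_add hnrpos, Real.rpow_add hnrpos, hkey]
      ring
    -- step 4 : assemble
    have hq_split : nr ^ q = nr ^ (nr * (1 - 1 / (m' : ℝ))) * nr ^ K := by
      rw [hq, Real.rpow_add hnrpos]
    have h2exp : (2 : ℝ) ^ (c1 * n) = Real.exp (Real.log 2 * ((c1 : ℝ) * nr)) := by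
      rw [← Real.rpow_natCast 2 (c1 * n), Real.rpow_def_of_pos two_pos]
      congr 1
      push_cast
      ring
    calc ((H n).ncard : ℝ)
        ≤ (2 : ℝ) ^ (c1 * n) * (nr + 1) ^ d := step1
      _ ≤ (2 : ℝ) ^ (c1 * n) * (nr ^ q * Real.exp nr) := by
          apply mul_le_mul_of_nonneg_left step2
          positivity
      _ = nr ^ (nr * (1 - 1 / (m' : ℝ))) * Real.exp (A * nr) * nr ^ K := by
          have hexpeq : Real.exp (Real.log 2 * ((c1 : ℝ) * nr)) * Real.exp nr
              = Real.exp (A * nr) := by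
            rw [← Real.exp_add, hA]
            congr 1
            ring
          rw [h2exp, hq_split, ← hexpeq]
          ring
      _ = nr ^ (nr * (1 - 1 / (m' : ℝ) + (A / Real.log nr + K / nr))) := hrhs.symm
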